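/- Let {x^k}, {y^k}, {d^k} be generated by Algorithm IRPNM with ρ ∈ [0,1). Then for every k, (1 − η)·r(x^k) ≤ (2 + ‖G_k‖)·‖d^k‖ and ‖d^k‖ ≤ a₂⁻¹(1 + η)(1 + ‖G_k‖)·r(x^k)^{1−ρ}, where ‖G_k‖ denotes the spectral norm of G_k. -/

import Mathlib

open Set Metric Filter Bornology
open scoped RealInnerProductSpace Topology ENNReal

noncomputable section

/-- Euclidean space `ℝⁿ`. -/
abbrev Eu (n : ℕ) : Type := EuclideanSpace ℝ (Fin n)

/-- The convex subdifferential of an extended-real-valued function `g` at `x`. -/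
def subdiff {n : ℕ} (g : Eu n → EReal) (x : Eu n) : Set (Eu n) :=
  {v | ∀ z : Eu n, g x + ((⟪v, z - x⟫ : ℝ) : EReal) ≤ g z}

/-- `g` is proper: not identically `+∞` and nowhere `-∞`. -/
def ProperFun {n : ℕ} (g : Eu n → EReal) : Prop :=
  (∃ x, g x ≠ ⊤) ∧ ∀ x, g x ≠ ⊥

/-- `g` is convex. -/
def ConvexFun {n : ℕ} (g : Eu n → EReal) : Prop :=
  ∀ x z : Eu n, ∀ a c : ℝ, 0 ≤ a → 0 ≤ c → a + c = 1 →
    g (a • x + c • z) ≤ (a : EReal) * g x + (c : EReal) * g z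

/-- The effective domain of `g`. -/
def domg {n : ℕ} (g : Eu n → EReal) : Set (Eu n) := {x | g x ≠ ⊤}

/-- `prox` is the proximal mapping of `g` (with parameter 1). -/
def IsProxOf {n : ℕ} (g : Eu n → EReal) (prox : Eu n → Eu n) : Prop :=
  ∀ z u : Eu n,
    ((‖prox z - z‖ ^ 2 / 2 : ℝ) : EReal) + g (prox z)
      ≤ ((‖u - z‖ ^ 2 / 2 : ℝ) : EReal) + g u

/-- `f(x) = ψ(Ax - b)`. -/
def fval {n m : ℕ} (ψ : Eu m → ℝ) (A : Eu n →L[ℝ] Eu m) (b : Eu m) (x : Eu n) : ℝ :=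
  ψ (A x - b)

/-- `∇f(x) = Aᵀ ∇ψ(Ax - b)`. -/
def gradfval {n m : ℕ} (gradψ : Eu m → Eu m) (A : Eu n →L[ℝ] Eu m) (b : Eu m)
    (x : Eu n) : Eu n :=
  ContinuousLinearMap.adjoint A (gradψ (A x - b))

/-- `∇²f(x) = Aᵀ ∇²ψ(Ax - b) A`. -/
def hessfval {n m : ℕ} (hessψ : Eu m → (Eu m →L[ℝ] Eu m)) (A : Eu n →L[ℝ] Eu m) (b : Eu m)
    (x : Eu n) : Eu n →L[ℝ] Eu n :=
  (ContinuousLinearMap.adjoint A).comp ((hessψ (A x - b)).comp A)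

/-- `F = f + g`, extended-real-valued. -/
def Fval {n m : ℕ} (ψ : Eu m → ℝ) (A : Eu n →L[ℝ] Eu m) (b : Eu m) (g : Eu n → EReal)
    (x : Eu n) : EReal :=
  ((fval ψ A b x : ℝ) : EReal) + g x

/-- The residual mapping `R(x) = x - prox_g(x - ∇f(x))`. -/
def Rres {n m : ℕ} (gradψ : Eu m → Eu m) (A : Eu n →L[ℝ] Eu m) (b : Eu m)
    (prox : Eu n → Eu n) (x : Eu n) : Eu n :=
  x - prox (x - gradfval gradψ A b x)

/-- The KKT residual `r(x) = ‖R(x)‖`. -/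
def rres {n m : ℕ} (gradψ : Eu m → Eu m) (A : Eu n →L[ℝ] Eu m) (b : Eu m)
    (prox : Eu n → Eu n) (x : Eu n) : ℝ :=
  ‖Rres gradψ A b prox x‖

/-- The subdifferential `∂F(x) = ∇f(x) + ∂g(x)`. -/
def subF {n m : ℕ} (gradψ : Eu m → Eu m) (A : Eu n →L[ℝ] Eu m) (b : Eu m)
    (g : Eu n → EReal) (x : Eu n) : Set (Eu n) :=
  {u | u - gradfval gradψ A b x ∈ subdiff g x}

/-- The stationary point set `S* = {x : 0 ∈ ∂F(x)}`. -/
def SstarSet {n m : ℕ} (gradψ : Eu m → Eu m) (A : Eu n →L[ℝ] Eu m) (b : Eu m)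
    (g : Eu n → EReal) : Set (Eu n) :=
  {x | (0 : Eu n) ∈ subF gradψ A b g x}

/-- Smallest eigenvalue of a (self-adjoint) operator, via the Rayleigh quotient. -/
def lamMin {m : ℕ} (T : Eu m →L[ℝ] Eu m) : ℝ :=
  sInf ((fun v => ⟪T v, v⟫) '' Metric.sphere (0 : Eu m) 1)

/-- The strong stationary point set `X* = {x ∈ S* : ∇²ψ(Ax-b) ⪰ 0}`. -/
def XstarSet {n m : ℕ} (gradψ : Eu m → Eu m) (hessψ : Eu m → (Eu m →L[ℝ] Eu m))
    (A : Eu n →L[ℝ] Eu m) (b : Eu m) (g : Eu n → EReal) : Set (Eu n) :=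
  {x | x ∈ SstarSet gradψ A b g ∧ ∀ v : Eu m, 0 ≤ ⟪hessψ (A x - b) v, v⟫}

/-- `ψ` is twice continuously differentiable on `A(O) - b`, with gradient `gradψ`
and Hessian `hessψ` there. -/
def TwiceDiffOn {n m : ℕ} (ψ : Eu m → ℝ) (gradψ : Eu m → Eu m)
    (hessψ : Eu m → (Eu m →L[ℝ] Eu m)) (A : Eu n →L[ℝ] Eu m) (b : Eu m)
    (O : Set (Eu n)) : Prop :=
  (∀ u ∈ (fun z : Eu n => A z - b) '' O, HasGradientAt ψ (gradψ u) u) ∧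
  (∀ u ∈ (fun z : Eu n => A z - b) '' O, HasFDerivAt gradψ (hessψ u) u) ∧
  ContinuousOn gradψ ((fun z : Eu n => A z - b) '' O) ∧
  ContinuousOn hessψ ((fun z : Eu n => A z - b) '' O)

/-- Assumption 1.1 of the paper, together with the data of the proximal map of `g`. -/
def BasicAssumptions {n m : ℕ} (ψ : Eu m → ℝ) (gradψ : Eu m → Eu m)
    (hessψ : Eu m → (Eu m →L[ℝ] Eu m)) (A : Eu n →L[ℝ] Eu m) (b : Eu m)
    (g : Eu n → EReal) (prox : Eu n → Eu n) (O : Set (Eu n)) : Prop :=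
  IsOpen O ∧ domg g ⊆ O ∧ TwiceDiffOn ψ gradψ hessψ A b O ∧
  ProperFun g ∧ ConvexFun g ∧ LowerSemicontinuous g ∧ ContinuousOn g (domg g) ∧
  IsProxOf g prox ∧
  (∃ c : ℝ, ∀ x, (c : EReal) ≤ Fval ψ A b g x) ∧
  (∀ c : ℝ, Bornology.IsBounded {x | Fval ψ A b g x ≤ (c : EReal)})

/-- The regularized Hessian `G_k = ∇²f(x_k) + a₁ [−λ_min(∇²ψ(Ax_k−b))]₊ AᵀA + μ I`. -/
def GkOf {n m : ℕ} (hessψ : Eu m → (Eu m →L[ℝ] Eu m)) (A : Eu n →L[ℝ] Eu m) (b : Eu m)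
    (a₁ μ : ℝ) (xk : Eu n) : Eu n →L[ℝ] Eu n :=
  hessfval hessψ A b xk
    + (a₁ * max 0 (-(lamMin (hessψ (A xk - b))))) • ((ContinuousLinearMap.adjoint A).comp A)
    + μ • (ContinuousLinearMap.id ℝ (Eu n))

/-- `R_k(y) = y - prox_g(y - ∇f(x_k) - G(y - x_k))`. -/
def RkRes {n m : ℕ} (gradψ : Eu m → Eu m) (A : Eu n →L[ℝ] Eu m) (b : Eu m)
    (prox : Eu n → Eu n) (G : Eu n →L[ℝ] Eu n) (xk yy : Eu n) : Eu n :=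
  yy - prox (yy - gradfval gradψ A b xk - G (yy - xk))

/-- `r_k(y) = ‖R_k(y)‖`. -/
def rkRes {n m : ℕ} (gradψ : Eu m → Eu m) (A : Eu n →L[ℝ] Eu m) (b : Eu m)
    (prox : Eu n → Eu n) (G : Eu n →L[ℝ] Eu n) (xk yy : Eu n) : ℝ :=
  ‖RkRes gradψ A b prox G xk yy‖

/-- The subproblem objective
`Θ_k(x) = f(x_k) + ⟨∇f(x_k), x - x_k⟩ + (1/2)⟨x - x_k, G (x - x_k)⟩ + g(x)`. -/
def ThetaK {n m : ℕ} (ψ : Eu m → ℝ) (gradψ : Eu m → Eu m) (A : Eu n →L[ℝ] Eu m) (b : Eu m)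
    (g : Eu n → EReal) (G : Eu n →L[ℝ] Eu n) (xk x : Eu n) : EReal :=
  ((fval ψ A b xk + ⟪gradfval gradψ A b xk, x - xk⟫
      + ⟪x - xk, G (x - xk)⟫ / 2 : ℝ) : EReal) + g x

/-- The Armijo descent condition `F(x_k) - F(x_k + βᵐ d) ≥ σ βᵐ μ ‖d‖²`. -/
def ArmijoOK {n m : ℕ} (ψ : Eu m → ℝ) (A : Eu n →L[ℝ] Eu m) (b : Eu m) (g : Eu n → EReal)
    (σ β μ : ℝ) (xk dk : Eu n) (M : ℕ) : Prop :=
  Fval ψ A b g (xk + β ^ M • dk) + ((σ * β ^ M * μ * ‖dk‖ ^ 2 : ℝ) : EReal)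
    ≤ Fval ψ A b g xk

/-- `hessψ` is strictly continuous at `u0` relative to `S` with modulus `Lψ`. -/
def StrictContAt {m : ℕ} (hessψ : Eu m → (Eu m →L[ℝ] Eu m)) (S : Set (Eu m)) (u0 : Eu m)
    (Lψ : ℝ) : Prop :=
  0 ≤ Lψ ∧ ∃ δ₀ > (0 : ℝ), ∀ z ∈ Metric.closedBall u0 δ₀ ∩ S,
    ∀ z' ∈ Metric.closedBall u0 δ₀ ∩ S, ‖hessψ z - hessψ z'‖ ≤ Lψ * ‖z - z'‖

/-- The KL property of `F = f + g` at `xbar` (general desingularizing function `φ`). -/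
def KLatGen {n m : ℕ} (ψ : Eu m → ℝ) (gradψ : Eu m → Eu m) (A : Eu n →L[ℝ] Eu m) (b : Eu m)
    (g : Eu n → EReal) (xbar : Eu n) : Prop :=
  ∃ δ > (0 : ℝ), ∃ ϖ : EReal, 0 < ϖ ∧ ∃ φ dφ : ℝ → ℝ,
    φ 0 = 0 ∧
    ContinuousOn φ {t : ℝ | 0 ≤ t ∧ (t : EReal) < ϖ} ∧
    ConcaveOn ℝ {t : ℝ | 0 ≤ t ∧ (t : EReal) < ϖ} φ ∧
    (∀ t : ℝ, 0 < t → (t : EReal) < ϖ → HasDerivAt φ (dφ t) t ∧ 0 < dφ t) ∧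
    ∀ z ∈ Metric.closedBall xbar δ,
      Fval ψ A b g xbar < Fval ψ A b g z → Fval ψ A b g z < Fval ψ A b g xbar + ϖ →
        ∀ v ∈ subF gradψ A b g z,
          1 ≤ dφ ((Fval ψ A b g z - Fval ψ A b g xbar).toReal) * ‖v‖

/-- The KL property of `F = f + g` with exponent `θ` at `xbar`. -/
def KLexpAt {n m : ℕ} (ψ : Eu m → ℝ) (gradψ : Eu m → Eu m) (A : Eu n →L[ℝ] Eu m) (b : Eu m)
    (g : Eu n → EReal) (θ : ℝ) (xbar : Eu n) : Prop :=
  ∃ δ > (0 : ℝ), ∃ ϖ : EReal, 0 < ϖ ∧ ∃ c > (0 : ℝ),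
    ∀ z ∈ Metric.closedBall xbar δ,
      Fval ψ A b g xbar < Fval ψ A b g z → Fval ψ A b g z < Fval ψ A b g xbar + ϖ →
        ∀ v ∈ subF gradψ A b g z,
          1 ≤ c * (1 - θ) * ((Fval ψ A b g z - Fval ψ A b g xbar).toReal) ^ (-θ) * ‖v‖

end

noncomputable section

/-- The data and assumptions of Algorithm IRPNM (inexact regularized proximal Newton method),
producing an infinite sequence of iterates `x k` with `r(x k) > 0` for all `k`. -/
structure IRPNM (n m : ℕ) where
  ψ : Eu m → ℝ
  gradψ : Eu m → Eu m
  hessψ : Eu m → (Eu m →L[ℝ] Eu m)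
  A : Eu n →L[ℝ] Eu m
  b : Eu m
  g : Eu n → EReal
  prox : Eu n → Eu n
  O : Set (Eu n)
  a₁ : ℝ
  a₂ : ℝ
  ρ : ℝ
  τ : ℝ
  η : ℝ
  β : ℝ
  σ : ℝ
  x : ℕ → Eu n
  y : ℕ → Eu n
  d : ℕ → Eu n
  mik : ℕ → ℕ
  α : ℕ → ℝ
  basic : BasicAssumptions ψ gradψ hessψ A b g prox O
  ha₁ : 1 ≤ a₁
  ha₂ : 0 < a₂
  hρ : 0 ≤ ρ ∧ ρ < 1
  hτ : ρ ≤ τ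
  hη : 0 < η ∧ η < 1
  hβ : 0 < β ∧ β < 1
  hσ : 0 < σ ∧ σ < 1/2
  hxdom : ∀ k, x k ∈ domg g
  hydom : ∀ k, y k ∈ domg g
  hrpos : ∀ k, 0 < rres gradψ A b prox (x k)
  /-- the inexactness criterion (3.1), used when `ρ ∈ (0,1)` -/
  hinexact_pos : 0 < ρ → ∀ k,
    rkRes gradψ A b prox
        (GkOf hessψ A b a₁ (a₂ * (rres gradψ A b prox (x k)) ^ ρ) (x k)) (x k) (y k)
      ≤ η * min (rres gradψ A b prox (x k)) ((rres gradψ A b prox (x k)) ^ (1 + τ)) ∧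
    ThetaK ψ gradψ A b g (GkOf hessψ A b a₁ (a₂ * (rres gradψ A b prox (x k)) ^ ρ) (x k))
        (x k) (y k)
      ≤ ThetaK ψ gradψ A b g (GkOf hessψ A b a₁ (a₂ * (rres gradψ A b prox (x k)) ^ ρ) (x k))
        (x k) (x k)
  /-- the inexactness criterion (3.2), used when `ρ = 0`:
  `dist(0, ∂Θ_k(y k)) ≤ η r(x k)` and `Θ_k(y k) ≤ Θ_k(x k)` -/
  hinexact_zero : ρ = 0 → ∀ k,
    (∃ v ∈ subdiff g (y k),
        ‖gradfval gradψ A b (x k)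
            + (GkOf hessψ A b a₁ (a₂ * (rres gradψ A b prox (x k)) ^ ρ) (x k)) (y k - x k)
            + v‖
          ≤ η * rres gradψ A b prox (x k)) ∧
    ThetaK ψ gradψ A b g (GkOf hessψ A b a₁ (a₂ * (rres gradψ A b prox (x k)) ^ ρ) (x k))
        (x k) (y k)
      ≤ ThetaK ψ gradψ A b g (GkOf hessψ A b a₁ (a₂ * (rres gradψ A b prox (x k)) ^ ρ) (x k))
        (x k) (x k)
  hd : ∀ k, d k = y k - x k
  /-- `mk k` is the smallest nonnegative integer `M` satisfying the Armijo condition -/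
  hls : ∀ k,
    ArmijoOK ψ A b g σ β (a₂ * (rres gradψ A b prox (x k)) ^ ρ) (x k) (d k) (mik k) ∧
    ∀ M < mik k, ¬ ArmijoOK ψ A b g σ β (a₂ * (rres gradψ A b prox (x k)) ^ ρ) (x k) (d k) M
  hα : ∀ k, α k = β ^ (mik k)
  /-- the update rule (3.6) -/
  hupdate : ∀ k,
    (Fval ψ A b g (y k) < Fval ψ A b g (x k + α k • d k) ∧ x (k+1) = y k) ∨
    (¬ Fval ψ A b g (y k) < Fval ψ A b g (x k + α k • d k) ∧ x (k+1) = x k + α k • d k)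

end

noncomputable section

section AuxLemmas

variable {n : ℕ} {g : Eu n → EReal} {prox : Eu n → Eu n}

lemma prox_ne_top (hp : ProperFun g) (hprox : IsProxOf g prox) (z : Eu n) :
    g (prox z) ≠ ⊤ := by
  obtain ⟨x0, hx0⟩ := hp.1
  intro htop
  have h := hprox z x0
  rw [htop] at h
  have hl : (((‖prox z - z‖ ^ 2 / 2 : ℝ) : EReal) + ⊤) = ⊤ := by
    simp
  rw [hl, top_le_iff] at h
  exact (EReal.add_lt_top (EReal.coe_ne_top _) hx0).ne h

lemma prox_subgrad (hp : ProperFun g) (hc : ConvexFun g) (hprox : IsProxOf g prox)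
    (z : Eu n) : z - prox z ∈ subdiff g (prox z) := by
  intro u
  by_cases hu : g u = ⊤
  · rw [hu]; exact le_top
  set p := prox z with hpdef
  have hgp : g p ≠ ⊤ := prox_ne_top hp hprox z
  set gp : ℝ := (g p).toReal with hgpdef
  set gu : ℝ := (g u).toReal with hgudef
  have hgpe : g p = (gp : EReal) := (EReal.coe_toReal hgp (hp.2 p)).symm
  have hgue : g u = (gu : EReal) := (EReal.coe_toReal hu (hp.2 u)).symm
  -- real inequality for every t ∈ (0,1]
  have key : ∀ t : ℝ, 0 < t → t ≤ 1 →
      gp ≤ ⟪p - z, u - p⟫ + t / 2 * ‖u - p‖ ^ 2 + gu := by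
    intro t ht ht1
    have hconv := hc p u (1 - t) t (by linarith) ht.le (by ring)
    have hprx := hprox z ((1 - t) • p + t • u)
    have hle : ((‖p - z‖ ^ 2 / 2 : ℝ) : EReal) + (gp : EReal)
        ≤ ((‖(1 - t) • p + t • u - z‖ ^ 2 / 2 : ℝ) : EReal)
          + (((1 - t) * gp + t * gu : ℝ) : EReal) := by
      rw [← hgpe]
      refine hprx.trans (add_le_add le_rfl ?_)
      refine hconv.trans ?_
      rw [hgpe, hgue, EReal.coe_add, ← EReal.coe_mul, ← EReal.coe_mul]
    rw [← EReal.coe_add, ← EReal.coe_add] at hle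
    have hre : ‖p - z‖ ^ 2 / 2 + gp
        ≤ ‖(1 - t) • p + t • u - z‖ ^ 2 / 2 + ((1 - t) * gp + t * gu) :=
      EReal.coe_le_coe_iff.mp hle
    have hexp : (1 - t) • p + t • u - z = (p - z) + t • (u - p) := by
      module
    rw [hexp] at hre
    have hnorm : ‖(p - z) + t • (u - p)‖ ^ 2
        = ‖p - z‖ ^ 2 + 2 * (t * ⟪p - z, u - p⟫) + t ^ 2 * ‖u - p‖ ^ 2 := by
      rw [norm_add_sq_real, real_inner_smul_right, norm_smul]
      simp [abs_of_pos ht, mul_pow]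
      try ring
    rw [hnorm] at hre
    nlinarith
  -- take t → 0
  have hfin : gp + ⟪z - p, u - p⟫ ≤ gu := by
    have h2 : gp - ⟪p - z, u - p⟫ - gu ≤ 0 := by
      by_contra hcon
      push_neg at hcon
      set ε := gp - ⟪p - z, u - p⟫ - gu with hε
      have hc2 : 0 ≤ ‖u - p‖ ^ 2 := sq_nonneg _
      have ht : 0 < min 1 (ε / (‖u - p‖ ^ 2 + 1)) := by
        apply lt_min one_pos
        positivity
      have := key _ ht (min_le_left _ _)
      have hmle : min 1 (ε / (‖u - p‖ ^ 2 + 1)) ≤ ε / (‖u - p‖ ^ 2 + 1) :=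
        min_le_right _ _
      have : min 1 (ε / (‖u - p‖ ^ 2 + 1)) / 2 * ‖u - p‖ ^ 2 < ε := by
        have h3 : min 1 (ε / (‖u - p‖ ^ 2 + 1)) * (‖u - p‖ ^ 2 + 1) ≤ ε := by
          rw [← le_div_iff₀ (by positivity)]
          exact hmle
        nlinarith
      linarith
    have : ⟪z - p, u - p⟫ = -⟪p - z, u - p⟫ := by
      rw [← inner_neg_left]; congr 1; abel
    linarith [h2, this]
  rw [hgpe, hgue, ← EReal.coe_add]
  exact EReal.coe_le_coe_iff.mpr hfin

lemma subdiff_mono (hp : ProperFun g) {p q v w : Eu n}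
    (hv : v ∈ subdiff g p) (hw : w ∈ subdiff g q)
    (hgp : g p ≠ ⊤) (hgq : g q ≠ ⊤) : 0 ≤ ⟪v - w, p - q⟫ := by
  set gp : ℝ := (g p).toReal
  set gq : ℝ := (g q).toReal
  have hgpe : g p = (gp : EReal) := (EReal.coe_toReal hgp (hp.2 p)).symm
  have hgqe : g q = (gq : EReal) := (EReal.coe_toReal hgq (hp.2 q)).symm
  have h1 := hv q
  have h2 := hw p
  rw [hgpe, hgqe, ← EReal.coe_add] at h1
  rw [hgpe, hgqe, ← EReal.coe_add] at h2
  have h1' : gp + ⟪v, q - p⟫ ≤ gq := EReal.coe_le_coe_iff.mp h1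
  have h2' : gq + ⟪w, p - q⟫ ≤ gp := EReal.coe_le_coe_iff.mp h2
  have e1 : ⟪v, q - p⟫ = -⟪v, p - q⟫ := by
    rw [← inner_neg_right]; congr 1; abel
  rw [inner_sub_left]
  rw [e1] at h1'
  linarith

lemma prox_nonexpansive (hp : ProperFun g) (hc : ConvexFun g) (hprox : IsProxOf g prox)
    (z₁ z₂ : Eu n) : ‖prox z₁ - prox z₂‖ ≤ ‖z₁ - z₂‖ := by
  have hm := subdiff_mono hp (prox_subgrad hp hc hprox z₁) (prox_subgrad hp hc hprox z₂)
    (prox_ne_top hp hprox z₁) (prox_ne_top hp hprox z₂)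
  have hexp : (z₁ - prox z₁) - (z₂ - prox z₂) = (z₁ - z₂) - (prox z₁ - prox z₂) := by abel
  rw [hexp, inner_sub_left, real_inner_self_eq_norm_sq] at hm
  have hcs := real_inner_le_norm (z₁ - z₂) (prox z₁ - prox z₂)
  rcases eq_or_lt_of_le (norm_nonneg (prox z₁ - prox z₂)) with h0 | h0
  · rw [← h0]; exact norm_nonneg _
  · nlinarith

lemma rk_le_of_subgrad (hp : ProperFun g) (hc : ConvexFun g) (hprox : IsProxOf g prox)
    (G : Eu n →L[ℝ] Eu n) (x y gf v : Eu n) (c : ℝ)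
    (hv : v ∈ subdiff g y) (hgy : g y ≠ ⊤)
    (hnorm : ‖gf + G (y - x) + v‖ ≤ c) (hcnn : 0 ≤ c) :
    ‖y - prox (y - gf - G (y - x))‖ ≤ c := by
  set z₂ := y - gf - G (y - x) with hz₂
  set p₂ := prox z₂ with hp₂
  have hmono := subdiff_mono hp hv (prox_subgrad hp hc hprox z₂) hgy
    (prox_ne_top hp hprox z₂)
  have e1 : v - (z₂ - p₂) = (gf + G (y - x) + v) - (y - p₂) := by
    rw [hz₂]; abel
  rw [e1] at hmono
  set q := gf + G (y - x) + v
  set R := y - p₂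
  have hexp : ⟪q - R, R⟫ = ⟪q, R⟫ - ‖R‖ ^ 2 := by
    rw [inner_sub_left, real_inner_self_eq_norm_sq]
  rw [hexp] at hmono
  have hcs := real_inner_le_norm q R
  rcases eq_or_lt_of_le (norm_nonneg R) with h0 | h0
  · rw [← h0]; exact hcnn
  · nlinarith

lemma key_ineqs (hp : ProperFun g) (hc : ConvexFun g) (hprox : IsProxOf g prox)
    (G : Eu n →L[ℝ] Eu n) (x y gf : Eu n) (μ η r : ℝ)
    (hGlow : μ * ‖y - x‖ ^ 2 ≤ ⟪G (y - x), y - x⟫)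
    (hr : r = ‖x - prox (x - gf)‖)
    (hrk : ‖y - prox (y - gf - G (y - x))‖ ≤ η * r) :
    (1 - η) * r ≤ (2 + ‖G‖) * ‖y - x‖ ∧
      μ * ‖y - x‖ ^ 2 ≤ (1 + η) * (1 + ‖G‖) * r * ‖y - x‖ := by
  set z₁ := x - gf with hz₁
  set z₂ := y - gf - G (y - x) with hz₂
  set p₁ := prox z₁ with hp₁
  set p₂ := prox z₂ with hp₂
  have hne : ‖p₂ - p₁‖ ≤ ‖z₂ - z₁‖ := prox_nonexpansive hp hc hprox z₂ z₁
  have e0 : z₂ - z₁ = (y - x) - G (y - x) := by rw [hz₁, hz₂]; abel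
  have hGop : ‖G (y - x)‖ ≤ ‖G‖ * ‖y - x‖ := G.le_opNorm _
  have hz21 : ‖z₂ - z₁‖ ≤ ‖y - x‖ + ‖G‖ * ‖y - x‖ := by
    rw [e0]
    exact (norm_sub_le _ _).trans (by linarith)
  constructor
  · -- first inequality
    have e1 : x - p₁ = (y - p₂) + ((x - p₁) - (y - p₂)) := by abel
    have htri : ‖x - p₁‖ ≤ ‖y - p₂‖ + ‖(x - p₁) - (y - p₂)‖ := by
      nth_rewrite 1 [e1]; exact norm_add_le _ _
    have e2 : (x - p₁) - (y - p₂) = (x - y) + (p₂ - p₁) := by abel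
    have htri2 : ‖(x - p₁) - (y - p₂)‖ ≤ ‖x - y‖ + ‖p₂ - p₁‖ := by
      rw [e2]; exact norm_add_le _ _
    have hxy : ‖x - y‖ = ‖y - x‖ := norm_sub_rev _ _
    have hexp2 : (2 + ‖G‖) * ‖y - x‖ = ‖y - x‖ + (‖y - x‖ + ‖G‖ * ‖y - x‖) := by ring
    have h21 := hne.trans hz21
    have hfin : r ≤ η * r + (2 + ‖G‖) * ‖y - x‖ := by
      rw [hexp2]
      linarith [htri, htri2, hrk, h21, hr]
    linarith
  · -- second inequality
    have hmono := subdiff_mono hp (prox_subgrad hp hc hprox z₁)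
      (prox_subgrad hp hc hprox z₂) (prox_ne_top hp hprox z₁) (prox_ne_top hp hprox z₂)
    set w : Eu n := (x - p₁) - (y - p₂) with hw
    have e3 : (z₁ - p₁) - (z₂ - p₂) = w + G (y - x) := by rw [hz₁, hz₂, hw]; abel
    have e4 : p₁ - p₂ = -(y - x) - w := by rw [hw]; abel
    rw [e3, e4] at hmono
    have hexp3 : ⟪w + G (y - x), -(y - x) - w⟫
        = -(⟪w, y - x⟫ + ‖w‖ ^ 2 + ⟪G (y - x), y - x⟫ + ⟪G (y - x), w⟫) := by
      have e5 : -(y - x) - w = -((y - x) + w) := by abel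
      rw [e5, inner_neg_right, inner_add_left, inner_add_right, inner_add_right,
        real_inner_self_eq_norm_sq]
      ring
    rw [hexp3] at hmono
    have hb1 : -⟪w, y - x⟫ ≤ ‖w‖ * ‖y - x‖ := by
      have := abs_real_inner_le_norm w (y - x)
      have h2 := neg_abs_le (⟪w, y - x⟫ : ℝ)
      linarith
    have hb2 : -⟪G (y - x), w⟫ ≤ ‖G‖ * ‖y - x‖ * ‖w‖ := by
      have h1 := abs_real_inner_le_norm (G (y - x)) w
      have h2 := neg_abs_le (⟪G (y - x), w⟫ : ℝ)
      have h3 : ‖G (y - x)‖ * ‖w‖ ≤ ‖G‖ * ‖y - x‖ * ‖w‖ :=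
        mul_le_mul_of_nonneg_right hGop (norm_nonneg _)
      linarith
    have hwle : ‖w‖ ≤ (1 + η) * r := by
      have h1 : ‖w‖ ≤ ‖x - p₁‖ + ‖y - p₂‖ := norm_sub_le _ _
      have he : (1 + η) * r = r + η * r := by ring
      rw [he]
      linarith [h1, hrk, hr]
    have hstep : μ * ‖y - x‖ ^ 2 ≤ ‖w‖ * ‖y - x‖ + ‖G‖ * ‖y - x‖ * ‖w‖ := by
      nlinarith [sq_nonneg ‖w‖]
    have hfac : ‖w‖ * ‖y - x‖ + ‖G‖ * ‖y - x‖ * ‖w‖ = ‖w‖ * ((1 + ‖G‖) * ‖y - x‖) := by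
      ring
    have hpos : 0 ≤ (1 + ‖G‖) * ‖y - x‖ := by positivity
    have hlast : ‖w‖ * ((1 + ‖G‖) * ‖y - x‖) ≤ (1 + η) * r * ((1 + ‖G‖) * ‖y - x‖) :=
      mul_le_mul_of_nonneg_right hwle hpos
    calc μ * ‖y - x‖ ^ 2 ≤ ‖w‖ * ((1 + ‖G‖) * ‖y - x‖) := by rw [← hfac]; exact hstep
      _ ≤ (1 + η) * r * ((1 + ‖G‖) * ‖y - x‖) := hlast
      _ = (1 + η) * (1 + ‖G‖) * r * ‖y - x‖ := by ring

end AuxLemmas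

lemma lamMin_le {m : ℕ} (T : Eu m →L[ℝ] Eu m) (w : Eu m) :
    lamMin T * ‖w‖ ^ 2 ≤ ⟪T w, w⟫ := by
  rcases eq_or_ne w 0 with rfl | hw
  · simp
  · have hbdd : BddBelow ((fun v => ⟪T v, v⟫) '' Metric.sphere (0 : Eu m) 1) :=
      ((isCompact_sphere (0 : Eu m) 1).image
        (Continuous.inner T.continuous continuous_id)).bddBelow
    have hnw : (0:ℝ) < ‖w‖ := norm_pos_iff.mpr hw
    have hmem : (‖w‖⁻¹ • w) ∈ Metric.sphere (0 : Eu m) 1 := by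
      simp [norm_smul, abs_of_pos (inv_pos.mpr hnw), inv_mul_cancel₀ hnw.ne']
    have hle : lamMin T ≤ ⟪T (‖w‖⁻¹ • w), ‖w‖⁻¹ • w⟫ :=
      csInf_le hbdd ⟨_, hmem, rfl⟩
    rw [map_smul, real_inner_smul_left, real_inner_smul_right] at hle
    have h2 : ⟪T w, w⟫ = ‖w‖ ^ 2 * (‖w‖⁻¹ * (‖w‖⁻¹ * ⟪T w, w⟫)) := by
      field_simp
    nlinarith
lemma Gk_lower {n m : ℕ} (hessψ : Eu m → (Eu m →L[ℝ] Eu m)) (A : Eu n →L[ℝ] Eu m)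
    (b : Eu m) {a₁ : ℝ} (μ : ℝ) (ha₁ : 1 ≤ a₁) (xk v : Eu n) :
    μ * ‖v‖ ^ 2 ≤ ⟪(GkOf hessψ A b a₁ μ xk) v, v⟫ := by
  set T := hessψ (A xk - b)
  have hexp : ⟪(GkOf hessψ A b a₁ μ xk) v, v⟫
      = ⟪T (A v), A v⟫ + (a₁ * max 0 (-(lamMin T))) * ‖A v‖ ^ 2 + μ * ‖v‖ ^ 2 := by
    simp only [GkOf, hessfval, ContinuousLinearMap.add_apply, ContinuousLinearMap.comp_apply,
      ContinuousLinearMap.smul_apply, ContinuousLinearMap.id_apply]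
    rw [inner_add_left, inner_add_left, real_inner_smul_left, real_inner_smul_left,
      ContinuousLinearMap.adjoint_inner_left, ContinuousLinearMap.adjoint_inner_left,
      real_inner_self_eq_norm_sq, real_inner_self_eq_norm_sq]
  rw [hexp]
  have h1 := lamMin_le T (A v)
  have h2 : max 0 (-(lamMin T)) ≤ a₁ * max 0 (-(lamMin T)) :=
    le_mul_of_one_le_left (le_max_left _ _) ha₁
  have h3 : -(lamMin T) ≤ max 0 (-(lamMin T)) := le_max_right _ _
  nlinarith [sq_nonneg ‖A v‖]


/-- inequalities (3.8) and (3.10). For the sequences generated by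
Algorithm IRPNM, `(1-η) r(x^k) ≤ (2 + ‖G_k‖)‖d^k‖` and
`‖d^k‖ ≤ a₂⁻¹ (1+η)(1+‖G_k‖) r(x^k)^{1-ρ}` for every `k`. -/
theorem statement9 {n m : ℕ} (P : IRPNM n m) (k : ℕ) :
    (1 - P.η) * rres P.gradψ P.A P.b P.prox (P.x k)
      ≤ (2 + ‖GkOf P.hessψ P.A P.b P.a₁
              (P.a₂ * (rres P.gradψ P.A P.b P.prox (P.x k)) ^ P.ρ) (P.x k)‖) * ‖P.d k‖ ∧
    ‖P.d k‖ ≤ P.a₂⁻¹ * (1 + P.η)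
        * (1 + ‖GkOf P.hessψ P.A P.b P.a₁
              (P.a₂ * (rres P.gradψ P.A P.b P.prox (P.x k)) ^ P.ρ) (P.x k)‖)
        * (rres P.gradψ P.A P.b P.prox (P.x k)) ^ (1 - P.ρ) := by
  obtain ⟨hO, hdomO, htd, hproper, hconvex, hlsc, hcontg, hproxg, hbound, hlevel⟩ := P.basic
  have hr : 0 < rres P.gradψ P.A P.b P.prox (P.x k) := P.hrpos k
  set x := P.x k with hx
  set y := P.y k with hy
  set r := rres P.gradψ P.A P.b P.prox x with hrdef
  set G := GkOf P.hessψ P.A P.b P.a₁ (P.a₂ * r ^ P.ρ) x with hG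
  set gf := gradfval P.gradψ P.A P.b x with hgf
  have hη := P.hη
  have hrk : ‖y - P.prox (y - gf - G (y - x))‖ ≤ P.η * r := by
    rcases eq_or_lt_of_le P.hρ.1 with hρ0 | hρpos
    · obtain ⟨⟨v, hv, hnorm⟩, -⟩ := P.hinexact_zero hρ0.symm k
      exact rk_le_of_subgrad hproper hconvex hproxg G x y gf v (P.η * r) hv (P.hydom k)
        hnorm (mul_nonneg hη.1.le hr.le)
    · have h := (P.hinexact_pos hρpos k).1
      have h2 : P.η * min r (r ^ (1 + P.τ)) ≤ P.η * r :=
        mul_le_mul_of_nonneg_left (min_le_left _ _) hη.1.le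
      exact le_trans h h2
  have hGlow : P.a₂ * r ^ P.ρ * ‖y - x‖ ^ 2 ≤ ⟪G (y - x), y - x⟫ :=
    Gk_lower P.hessψ P.A P.b (P.a₂ * r ^ P.ρ) P.ha₁ x (y - x)
  have key := key_ineqs hproper hconvex hproxg G x y gf (P.a₂ * r ^ P.ρ) P.η r hGlow rfl hrk
  refine ⟨?_, ?_⟩
  · rw [P.hd k]; exact key.1
  · rw [P.hd k]
    have htpos : 0 < r ^ P.ρ := Real.rpow_pos_of_pos hr _
    have hrw : r ^ (1 - P.ρ) = r * (r ^ P.ρ)⁻¹ := by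
      rw [Real.rpow_sub hr, Real.rpow_one, div_eq_mul_inv]
    rcases eq_or_lt_of_le (norm_nonneg (y - x)) with h0 | h0
    · rw [← h0]
      have h1 : (0:ℝ) ≤ 1 + P.η := by linarith [hη.1]
      have h2 : (0:ℝ) ≤ 1 + ‖G‖ := by linarith [norm_nonneg G]
      have h3 : (0:ℝ) ≤ P.a₂⁻¹ := inv_nonneg.mpr P.ha₂.le
      exact mul_nonneg (mul_nonneg (mul_nonneg h3 h1) h2) (Real.rpow_nonneg hr.le _)
    · have hkey2 : P.a₂ * r ^ P.ρ * ‖y - x‖ ≤ (1 + P.η) * (1 + ‖G‖) * r :=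
        le_of_mul_le_mul_right (by nlinarith [key.2]) h0
      rw [hrw]
      have heq : P.a₂⁻¹ * (1 + P.η) * (1 + ‖G‖) * (r * (r ^ P.ρ)⁻¹)
          = ((1 + P.η) * (1 + ‖G‖) * r) / (P.a₂ * r ^ P.ρ) := by
        rw [div_eq_mul_inv, mul_inv]
        ring
      rw [heq, le_div_iff₀ (mul_pos P.ha₂ htpos)]
      nlinarith [hkey2]


end
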